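/- For n ≥ 25 and any factorisation n = ab with a ≥ 2 and b ≥ 3, (a!)^b · b! ≤ 6 · (⌈n/3⌉!)³. -/

import Mathlib

open Nat

private lemma aux_fact_le_pow (s : ℕ) : (s + 1)! ≤ (s + 1) ^ s := by
  induction s with
  | zero => simp
  | succ t ih =>
    calc (t + 2)! = (t + 2) * (t + 1)! := rfl
    _ ≤ (t + 2) * (t + 1) ^ t := Nat.mul_le_mul_left _ ih
    _ ≤ (t + 2) * (t + 2) ^ t := by gcongr; omega
    _ = (t + 2) ^ (t + 1) := by ring

private lemma aux_pow_add (n x : ℕ) : x ^ (n + 1) + (n + 1) * x ^ n ≤ (x + 1) ^ (n + 1) := by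
  induction n with
  | zero => simp
  | succ t ih =>
    have h := Nat.mul_le_mul_right (x + 1) ih
    calc x ^ (t + 2) + (t + 2) * x ^ (t + 1)
        ≤ (x ^ (t + 1) + (t + 1) * x ^ t) * (x + 1) := by ring_nf; nlinarith [pow_nonneg (Nat.zero_le x) t]
    _ ≤ (x + 1) ^ (t + 1) * (x + 1) := h
    _ = (x + 1) ^ (t + 2) := by ring

private lemma aux_two_mul_pow (s : ℕ) : 2 * (s + 1) ^ (s + 1) ≤ (s + 2) ^ (s + 1) := by
  have h := aux_pow_add s (s + 1)
  calc 2 * (s + 1) ^ (s + 1) = (s + 1) ^ (s + 1) + (s + 1) * (s + 1) ^ s := by ring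
  _ ≤ (s + 1 + 1) ^ (s + 1) := h

private lemma aux_choose_step (m k : ℕ) (h : 2 * (k + 1) ≤ m) :
    m.choose k ≤ m.choose (k + 1) := by
  have key := Nat.choose_succ_right_eq m k
  have h1 : m.choose k * (k + 1) ≤ m.choose (k + 1) * (k + 1) := by
    rw [key]; exact Nat.mul_le_mul_left _ (by omega)
  exact Nat.le_of_mul_le_mul_right h1 (by omega)

private lemma aux_choose_mono (m k l : ℕ) (hkl : k ≤ l) (hl : 2 * l ≤ m) :
    m.choose k ≤ m.choose l := by
  induction l with
  | zero =>
    have : k = 0 := by omega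
    subst this; rfl
  | succ t ih =>
    rcases Nat.lt_or_ge k (t + 1) with h | h
    · exact le_trans (ih (by omega) (by omega)) (aux_choose_step m t hl)
    · have : k = t + 1 := by omega
      subst this; rfl

private lemma key_lemma : ∀ b, 3 ≤ b → ∀ a, 2 ≤ a →
    a ! ^ b * b ! ≤ 6 * ((a * b + 2) / 3)! ^ 3 := by
  intro b
  induction b using Nat.strong_induction_on with
  | _ b IH =>
  intro hb a ha
  rcases Nat.lt_or_ge b 6 with hb6 | hb6
  · -- base cases b = 3, 4, 5
    interval_cases b
    · -- b = 3
      have hm : (a * 3 + 2) / 3 = a := by omega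
      rw [hm]
      have : a ! ^ 3 * 3! = 6 * a ! ^ 3 := by simp [Nat.factorial]; ring
      rw [this]
    · -- b = 4
      obtain ⟨s, rfl⟩ : ∃ s, a = s + 1 := ⟨a - 1, by omega⟩
      set a := s + 1 with hadef
      have hs : 1 ≤ s := by omega
      set k := (a + 2) / 3 with hk
      have hm : (a * 4 + 2) / 3 = a + k := by omega
      rw [hm]
      have h1 : a ! * (a + 1) ^ k ≤ (a + k)! := Nat.factorial_mul_pow_le_factorial
      have h2 : 4 * a ! ≤ (a + 1) ^ a := by
        calc 4 * a ! ≤ 4 * a ^ s := by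
              exact Nat.mul_le_mul_left _ (aux_fact_le_pow s)
        _ ≤ (2 * a) * a ^ s := by
              apply Nat.mul_le_mul_right; omega
        _ = 2 * a ^ (s + 1) := by ring
        _ ≤ (s + 2) ^ (s + 1) := aux_two_mul_pow s
        _ = (a + 1) ^ a := rfl
      have h3 : a ≤ 3 * k := by omega
      have h4 : (a + 1) ^ a ≤ (a + 1) ^ (3 * k) :=
        Nat.pow_le_pow_right (by omega) h3
      calc a ! ^ 4 * 4! = 6 * ((4 * a !) * a ! ^ 3) := by
            simp [Nat.factorial]; ring
      _ ≤ 6 * ((a + 1) ^ (3 * k) * a ! ^ 3) := by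
            exact Nat.mul_le_mul_left _ (Nat.mul_le_mul_right _ (le_trans h2 h4))
      _ = 6 * (a ! * (a + 1) ^ k) ^ 3 := by ring
      _ ≤ 6 * ((a + k)!) ^ 3 := by
            exact Nat.mul_le_mul_left _ (Nat.pow_le_pow_left h1 3)
    · -- b = 5
      rcases Nat.lt_or_ge a 3 with ha3 | ha3
      · have : a = 2 := by omega
        subst this; decide
      obtain ⟨s, rfl⟩ : ∃ s, a = s + 1 := ⟨a - 1, by omega⟩
      set a := s + 1 with hadef
      have hs : 2 ≤ s := by omega
      set k := (2 * a + 2) / 3 with hk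
      have hm : (a * 5 + 2) / 3 = a + k := by omega
      rw [hm]
      have h1 : a ! * (a + 1) ^ k ≤ (a + k)! := Nat.factorial_mul_pow_le_factorial
      have h2 : 20 * a ! ^ 2 ≤ (a + 1) ^ (2 * a) := by
        have hf : a ! ≤ a ^ s := aux_fact_le_pow s
        have h2p : 2 * a ^ (s + 1) ≤ (s + 2) ^ (s + 1) := aux_two_mul_pow s
        calc 20 * a ! ^ 2 ≤ 20 * (a ^ s) ^ 2 := by
              exact Nat.mul_le_mul_left _ (Nat.pow_le_pow_left hf 2)
        _ ≤ (2 * a) ^ 2 * (a ^ s) ^ 2 := by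
              apply Nat.mul_le_mul_right; nlinarith
        _ = (2 * a ^ (s + 1)) ^ 2 := by ring
        _ ≤ ((s + 2) ^ (s + 1)) ^ 2 := Nat.pow_le_pow_left h2p 2
        _ = (a + 1) ^ (2 * a) := by rw [← pow_mul, hadef]; ring
      have h3 : 2 * a ≤ 3 * k := by omega
      have h4 : (a + 1) ^ (2 * a) ≤ (a + 1) ^ (3 * k) :=
        Nat.pow_le_pow_right (by omega) h3
      calc a ! ^ 5 * 5! = 6 * ((20 * a ! ^ 2) * a ! ^ 3) := by
            simp [Nat.factorial]; ring
      _ ≤ 6 * ((a + 1) ^ (3 * k) * a ! ^ 3) := by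
            exact Nat.mul_le_mul_left _ (Nat.mul_le_mul_right _ (le_trans h2 h4))
      _ = 6 * (a ! * (a + 1) ^ k) ^ 3 := by ring
      _ ≤ 6 * ((a + k)!) ^ 3 := by
            exact Nat.mul_le_mul_left _ (Nat.pow_le_pow_left h1 3)
  · -- inductive step, b ≥ 6
    obtain ⟨c, rfl⟩ : ∃ c, b = c + 3 := ⟨b - 3, by omega⟩
    have hc : 3 ≤ c := by omega
    set m' := (a * c + 2) / 3 with hm'
    have hmul : a * (c + 3) = a * c + a * 3 := by ring
    have hm : (a * (c + 3) + 2) / 3 = m' + a := by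
      rw [hmul]; omega
    rw [hm]
    have hac : 3 * a ≤ a * c := by nlinarith
    have ham' : a ≤ m' := by omega
    have hIH : a ! ^ c * c ! ≤ 6 * m' ! ^ 3 := IH c (by omega) hc a ha
    set m := m' + a with hmdef
    set C := m.choose a with hC
    have hchoose : C * a ! * m' ! = m ! := by
      have := Nat.choose_mul_factorial_mul_factorial (n := m) (k := a) (by omega)
      simpa [hmdef, Nat.add_sub_cancel] using this
    -- show c + 3 ≤ C
    have h3m : a * (c + 3) ≤ 3 * m := by
      rw [hmul]; omega
    have h2b : 2 * (c + 3) ≤ a * (c + 3) := Nat.mul_le_mul_right _ ha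
    have hm4 : 4 ≤ m := by
      have : 2 * 6 ≤ a * (c + 3) := Nat.mul_le_mul ha (by omega)
      omega
    have hmm : 2 * (c + 3) ≤ m * (m - 1) := by
      have h1 : 3 * m ≤ m * (m - 1) := by
        calc 3 * m ≤ (m - 1) * m := Nat.mul_le_mul_right _ (by omega)
        _ = m * (m - 1) := Nat.mul_comm _ _
      omega
    have hC2 : c + 3 ≤ m.choose 2 := by
      rw [Nat.choose_two_right]; omega
    have hCb : c + 3 ≤ C := le_trans hC2 (aux_choose_mono m 2 a ha (by omega))
    have hcube : (c + 1) * ((c + 2) * (c + 3)) ≤ C ^ 3 := by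
      calc (c + 1) * ((c + 2) * (c + 3)) ≤ (c + 3) * ((c + 3) * (c + 3)) := by
            apply Nat.mul_le_mul (by omega) (Nat.mul_le_mul (by omega) (le_refl _))
      _ ≤ C * (C * C) := Nat.mul_le_mul hCb (Nat.mul_le_mul hCb hCb)
      _ = C ^ 3 := by ring
    calc a ! ^ (c + 3) * (c + 3)!
        = (a ! ^ c * c !) * (a ! ^ 3 * ((c + 1) * ((c + 2) * (c + 3)))) := by
          simp [Nat.factorial_succ]; ring
    _ ≤ (6 * m' ! ^ 3) * (a ! ^ 3 * C ^ 3) :=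
          Nat.mul_le_mul hIH (Nat.mul_le_mul_left _ hcube)
    _ = 6 * (C * a ! * m' !) ^ 3 := by ring
    _ = 6 * m ! ^ 3 := by rw [hchoose]

/-- For `n ≥ 25` and any factorisation `n = ab` with `a ≥ 2` and `b ≥ 3`,
`(a!)^b · b! ≤ 6 · (⌈n/3⌉!)³`. -/
theorem stmt_15 (n a b : ℕ) (hn : 25 ≤ n) (h : n = a * b) (ha : 2 ≤ a) (hb : 3 ≤ b) :
    a.factorial ^ b * b.factorial ≤ 6 * ((n + 2) / 3).factorial ^ 3 := by
  subst h
  exact key_lemma b hb a ha
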